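/- Let (Ω,𝒜,ℙ) be a probability space, V an H-valued random variable with law μ₀, Y an ℝᴺ-valued random variable, and Q a regular conditional distribution for Y given V. Suppose there is a probability measure γ on ℝᴺ with Q(v,·) ≪ γ for every v ∈ H, with jointly measurable density ρ(v,y) = dQ(v,·)/dγ(y). Define Z(y) = ∫_H ρ(v,y) μ₀(dv) and let μ(y,·) be the measure with density ρ(v,y)/Z(y) against μ₀ when Z(y) > 0, and an arbitrary fixed probability measure otherwise. Then for all bounded measurable φ : H → ℝ and all Borel B ⊆ ℝᴺ, E[φ(V) 1_{Y ∈ B}] = E[(∫_H φ(v) μ(Y, dv)) 1_{Y ∈ B}]; that is, μ is a regular conditional distribution for V given Y. -/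

import Mathlib

open MeasureTheory
open scoped ENNReal

/-- General Bayes' theorem: if `Q` is a regular conditional distribution for `Y` given `V`,
with `Q v = γ.withDensity (ρ v)` for a jointly measurable density `ρ`, `Z y = ∫ ρ(v,y) μ₀(dv)`
(`μ₀ = law(V)`), and `μ y` is the normalized reweighting of `μ₀` by `ρ(·,y)` when `Z y > 0`
(an arbitrary fixed probability measure otherwise), then for all bounded measurable `φ` and
Borel `B`, `E[φ(V) 1_{Y∈B}] = E[(∫ φ dμ(Y)) 1_{Y∈B}]`; i.e. `μ` is a regular conditional
distribution for `V` given `Y`. -/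
theorem stmt_12 {Ω H : Type*} [MeasurableSpace Ω] [MeasurableSpace H]
    (P : Measure Ω) [IsProbabilityMeasure P] (n : ℕ)
    (V : Ω → H) (hV : Measurable V)
    (Y : Ω → (Fin n → ℝ)) (hY : Measurable Y)
    (Q : H → Measure (Fin n → ℝ)) [∀ v, IsProbabilityMeasure (Q v)]
    (hQmeas : ∀ A : Set (Fin n → ℝ), MeasurableSet A → Measurable (fun v => Q v A))
    (hQcond : ∀ A : Set (Fin n → ℝ), MeasurableSet A →
      (fun ω => (Q (V ω) A).toReal)
        =ᵐ[P] P[fun ω => Set.indicator A (fun _ => (1 : ℝ)) (Y ω) |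
              MeasurableSpace.comap V inferInstance])
    (γ : Measure (Fin n → ℝ)) [IsProbabilityMeasure γ]
    (ρ : H → (Fin n → ℝ) → ℝ≥0∞) (hρ : Measurable (Function.uncurry ρ))
    (hQγ : ∀ v, Q v = γ.withDensity (ρ v))
    (Z : (Fin n → ℝ) → ℝ≥0∞) (hZ : ∀ y, Z y = ∫⁻ v, ρ v y ∂(Measure.map V P))
    (ν : Measure H) [IsProbabilityMeasure ν]
    (μ : (Fin n → ℝ) → Measure H)
    (hμpos : ∀ y, Z y ≠ 0 →
      μ y = (Z y)⁻¹ • (Measure.map V P).withDensity (fun v => ρ v y))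
    (hμzero : ∀ y, Z y = 0 → μ y = ν) :
    ∀ φ : H → ℝ, Measurable φ → (∃ M : ℝ, ∀ v, |φ v| ≤ M) →
      ∀ B : Set (Fin n → ℝ), MeasurableSet B →
        ∫ ω, φ (V ω) * Set.indicator B (fun _ => (1 : ℝ)) (Y ω) ∂P
          = ∫ ω, (∫ v, φ v ∂(μ (Y ω))) * Set.indicator B (fun _ => (1 : ℝ)) (Y ω) ∂P := by
  haveI hμ₀prob : IsProbabilityMeasure (Measure.map V P) :=
    Measure.isProbabilityMeasure_map hV.aemeasurable
  -- generic integrability of bounded measurable functions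
  have intbdΩ : ∀ (f : Ω → ℝ), Measurable f → ∀ C : ℝ, (∀ x, |f x| ≤ C) → Integrable f P := by
    intro f hf C hC
    exact (integrable_const C).mono' hf.aestronglyMeasurable (Filter.Eventually.of_forall fun ω => by
      simpa [Real.norm_eq_abs] using hC ω)
  have intbdH : ∀ (m : Measure H), m Set.univ ≤ 1 →
      ∀ (f : H → ℝ), Measurable f → ∀ C : ℝ, (∀ x, |f x| ≤ C) → Integrable f m := by
    intro m hm f hf C hC
    haveI : IsFiniteMeasure m := ⟨lt_of_le_of_lt hm ENNReal.one_lt_top⟩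
    exact (integrable_const C).mono' hf.aestronglyMeasurable (Filter.Eventually.of_forall fun ω => by
      simpa [Real.norm_eq_abs] using hC ω)
  -- measurability of sections of ρ
  have hρy : ∀ y, Measurable fun v => ρ v y := fun y =>
    hρ.comp (measurable_id.prodMk measurable_const)
  have hρv : ∀ v, Measurable (ρ v) := fun v =>
    hρ.comp (measurable_const.prodMk measurable_id)
  have hZmeas : Measurable Z := by
    have : Measurable fun y => ∫⁻ v, ρ v y ∂(Measure.map V P) :=
      Measurable.lintegral_prod_left' (f := Function.uncurry ρ) hρ
    simpa [← funext hZ] using this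
  have hρint : ∀ v, ∫⁻ y, ρ v y ∂γ = 1 := by
    intro v
    have h1 : Q v Set.univ = 1 := measure_univ
    rw [hQγ v, withDensity_apply _ MeasurableSet.univ, Measure.restrict_univ] at h1
    exact h1
  -- the indicator facts
  have hindmeas : ∀ B : Set (Fin n → ℝ), MeasurableSet B →
      Measurable (fun ω => Set.indicator B (fun _ => (1:ℝ)) (Y ω)) := fun B hB =>
    (measurable_const.indicator hB).comp hY
  have hindbd : ∀ B : Set (Fin n → ℝ), ∀ ω, |Set.indicator B (fun _ => (1:ℝ)) (Y ω)| ≤ 1 := by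
    intro B ω; by_cases h : Y ω ∈ B <;> simp [h]
  -- Step 1: conditioning
  have step1 : ∀ (φ : H → ℝ), Measurable φ → ∀ M : ℝ, (∀ v, |φ v| ≤ M) →
      ∀ B : Set (Fin n → ℝ), MeasurableSet B →
      ∫ ω, φ (V ω) * Set.indicator B (fun _ => (1 : ℝ)) (Y ω) ∂P
        = ∫ ω, φ (V ω) * (Q (V ω) B).toReal ∂P := by
    intro φ hφ M hM B hB
    have hm : MeasurableSpace.comap V inferInstance ≤ (inferInstance : MeasurableSpace Ω) :=
      hV.comap_le
    have hVm : @Measurable Ω H (MeasurableSpace.comap V inferInstance) _ V := fun s hs => ⟨s, hs, rfl⟩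
    have hφV : @StronglyMeasurable Ω ℝ _ (MeasurableSpace.comap V inferInstance) (fun ω => φ (V ω)) :=
      Measurable.stronglyMeasurable (hφ.comp hVm)
    have hind : Integrable (fun ω => Set.indicator B (fun _ => (1:ℝ)) (Y ω)) P :=
      intbdΩ _ (hindmeas B hB) 1 (hindbd B)
    have hmul : Integrable ((fun ω => φ (V ω)) * (fun ω => Set.indicator B (fun _ => (1:ℝ)) (Y ω))) P := by
      apply intbdΩ _ ((hφ.comp hV).mul (hindmeas B hB)) (|M|)
      intro ω
      calc |φ (V ω) * Set.indicator B (fun _ => (1:ℝ)) (Y ω)|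
          = |φ (V ω)| * |Set.indicator B (fun _ => (1:ℝ)) (Y ω)| := abs_mul _ _
        _ ≤ |M| * 1 := mul_le_mul ((hM _).trans (le_abs_self M)) (hindbd B ω) (abs_nonneg _) (abs_nonneg _)
        _ = |M| := mul_one _
    calc ∫ ω, φ (V ω) * Set.indicator B (fun _ => (1:ℝ)) (Y ω) ∂P
        = ∫ ω, (P[(fun ω => φ (V ω)) * (fun ω => Set.indicator B (fun _ => (1:ℝ)) (Y ω)) |
            MeasurableSpace.comap V inferInstance]) ω ∂P := (integral_condExp hm).symm
      _ = ∫ ω, ((fun ω => φ (V ω)) * P[(fun ω => Set.indicator B (fun _ => (1:ℝ)) (Y ω)) |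
            MeasurableSpace.comap V inferInstance]) ω ∂P :=
          integral_congr_ae (condExp_mul_of_stronglyMeasurable_left hφV hmul hind)
      _ = ∫ ω, φ (V ω) * (Q (V ω) B).toReal ∂P := by
          refine integral_congr_ae ?_
          filter_upwards [hQcond B hB] with ω h
          simp only [Pi.mul_apply]
          rw [← h]
  -- Tonelli
  have tonelli : ∀ (f : H → ℝ≥0∞), Measurable f → ∀ B : Set (Fin n → ℝ), MeasurableSet B →
      ∫⁻ v, f v * ∫⁻ y in B, ρ v y ∂γ ∂(Measure.map V P)
        = ∫⁻ y in B, ∫⁻ v, f v * ρ v y ∂(Measure.map V P) ∂γ := by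
    intro f hf B hB
    have h1 : ∀ v, f v * ∫⁻ y in B, ρ v y ∂γ = ∫⁻ y in B, f v * ρ v y ∂γ := fun v =>
      (lintegral_const_mul (f v) (hρv v)).symm
    simp only [h1]
    exact lintegral_lintegral_swap ((hf.comp measurable_fst).mul hρ).aemeasurable
  -- total mass of Z against γ and a.e. finiteness
  have hZint : ∫⁻ y, Z y ∂γ = 1 := by
    have hswap : ∫⁻ y, ∫⁻ v, ρ v y ∂(Measure.map V P) ∂γ
        = ∫⁻ v, ∫⁻ y, ρ v y ∂γ ∂(Measure.map V P) :=
      (lintegral_lintegral_swap hρ.aemeasurable).symm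
    simp only [hZ]
    rw [hswap]
    simp [hρint]
  have hZae : ∀ᵐ y ∂γ, Z y < ⊤ := ae_lt_top hZmeas (by rw [hZint]; exact ENNReal.one_ne_top)
  -- the law of Y
  have hYlaw : Measure.map Y P = γ.withDensity Z := by
    ext A hA
    have e1 : (Measure.map Y P) A = P (Y ⁻¹' A) := Measure.map_apply hY hA
    have e2 : ∫ ω, (1:ℝ) * Set.indicator A (fun _ => (1:ℝ)) (Y ω) ∂P
        = ∫ ω, (1:ℝ) * (Q (V ω) A).toReal ∂P :=
      step1 (fun _ => 1) measurable_const 1 (fun _ => by simp) A hA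
    simp only [one_mul] at e2
    have e3 : ∫ ω, Set.indicator A (fun _ => (1:ℝ)) (Y ω) ∂P = (P (Y ⁻¹' A)).toReal := by
      have : (fun ω => Set.indicator A (fun _ => (1:ℝ)) (Y ω))
          = fun ω => Set.indicator (Y ⁻¹' A) (fun _ => (1:ℝ)) ω := by
        funext ω; by_cases h : Y ω ∈ A <;> simp [h, Set.indicator_apply]
      rw [this, integral_indicator (hY hA)]
      simp [Measure.real]
    have e4 : ENNReal.ofReal (∫ ω, (Q (V ω) A).toReal ∂P) = ∫⁻ ω, Q (V ω) A ∂P := by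
      rw [ofReal_integral_eq_lintegral_ofReal]
      · refine lintegral_congr fun ω => ?_
        exact ENNReal.ofReal_toReal (measure_ne_top _ _)
      · refine intbdΩ _ (((hQmeas A hA).comp hV).ennreal_toReal) 1 fun ω => ?_
        rw [abs_of_nonneg ENNReal.toReal_nonneg]
        exact ENNReal.toReal_le_of_le_ofReal zero_le_one (by simpa using prob_le_one)
      · exact Filter.Eventually.of_forall fun ω => ENNReal.toReal_nonneg
    have e5 : ∫⁻ ω, Q (V ω) A ∂P = ∫⁻ v, Q v A ∂(Measure.map V P) :=
      (lintegral_map (hQmeas A hA) hV).symm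
    have e6 : ∫⁻ v, Q v A ∂(Measure.map V P)
        = ∫⁻ y in A, Z y ∂γ := by
      have : ∀ v, Q v A = (1:ℝ≥0∞) * ∫⁻ y in A, ρ v y ∂γ := fun v => by
        rw [one_mul, hQγ v, withDensity_apply _ hA]
      simp only [this]
      rw [tonelli (fun _ => 1) measurable_const A hA]
      simp only [one_mul]
      exact lintegral_congr fun y => (hZ y).symm
    rw [e1, withDensity_apply _ hA, ← e6, ← e5, ← e4, ← e2, e3,
      ENNReal.ofReal_toReal (measure_ne_top _ _)]
  -- mass bounds for μ
  have hmass : ∀ y, μ y Set.univ ≤ 1 := by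
    intro y
    by_cases h : Z y = 0
    · rw [hμzero y h]; simp
    · rw [hμpos y h]
      rw [Measure.smul_apply, smul_eq_mul, withDensity_apply _ MeasurableSet.univ,
        Measure.restrict_univ, ← hZ y]
      rcases eq_or_ne (Z y) ⊤ with ht | ht
      · simp [ht]
      · rw [ENNReal.inv_mul_cancel h ht]
  haveI hfinμ : ∀ y, IsFiniteMeasure (μ y) := fun y =>
    ⟨lt_of_le_of_lt (hmass y) ENNReal.one_lt_top⟩
  -- bound on ∫ φ dμ y
  have hIbd : ∀ (φ : H → ℝ) (M : ℝ), (∀ v, |φ v| ≤ M) → ∀ y, |∫ v, φ v ∂(μ y)| ≤ |M| := by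
    intro φ M hM y
    have h1 : ‖∫ v, φ v ∂(μ y)‖ ≤ |M| * ((μ y) Set.univ).toReal :=
      norm_integral_le_of_norm_le_const (Filter.Eventually.of_forall fun v => by
        simpa [Real.norm_eq_abs] using (hM v).trans (le_abs_self M))
    have h2 : ((μ y) Set.univ).toReal ≤ 1 := by
      have := ENNReal.toReal_mono ENNReal.one_ne_top (hmass y)
      simpa using this
    calc |∫ v, φ v ∂(μ y)| ≤ |M| * ((μ y) Set.univ).toReal := h1
      _ ≤ |M| * 1 := mul_le_mul_of_nonneg_left h2 (abs_nonneg M)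
      _ = |M| := mul_one _
  -- measurability of y ↦ ∫⁻ f v * ρ v y dμ₀
  have hGmeas : ∀ (f : H → ℝ≥0∞), Measurable f →
      Measurable (fun y => ∫⁻ v, f v * ρ v y ∂(Measure.map V P)) := by
    intro f hf
    exact Measurable.lintegral_prod_left'
      (f := fun p : H × (Fin n → ℝ) => f p.1 * Function.uncurry ρ p)
      ((hf.comp measurable_fst).mul hρ)
  -- explicit representation of ∫ φ dμ y for nonnegative φ
  have hgrep : ∀ (φ : H → ℝ), Measurable φ → (∀ v, 0 ≤ φ v) →
      ∀ y, ∫ v, φ v ∂(μ y) = if Z y = 0 then ∫ v, φ v ∂ν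
        else ((Z y)⁻¹).toReal
          * (∫⁻ v, ENNReal.ofReal (φ v) * ρ v y ∂(Measure.map V P)).toReal := by
    intro φ hφ hφ0 y
    by_cases h : Z y = 0
    · rw [hμzero y h, if_pos h]
    · rw [hμpos y h, if_neg h, integral_smul_measure, smul_eq_mul]
      congr 1
      rw [integral_eq_lintegral_of_nonneg_ae (Filter.Eventually.of_forall hφ0)
        hφ.aestronglyMeasurable]
      congr 1
      rw [lintegral_withDensity_eq_lintegral_mul _ (hρy y) hφ.ennreal_ofReal]
      exact lintegral_congr fun v => mul_comm _ _
  have hgmeas : ∀ (φ : H → ℝ), Measurable φ → (∀ v, 0 ≤ φ v) →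
      Measurable (fun y => ∫ v, φ v ∂(μ y)) := by
    intro φ hφ hφ0
    have : (fun y => ∫ v, φ v ∂(μ y)) = fun y => if Z y = 0 then ∫ v, φ v ∂ν
        else ((Z y)⁻¹).toReal
          * (∫⁻ v, ENNReal.ofReal (φ v) * ρ v y ∂(Measure.map V P)).toReal :=
      funext (hgrep φ hφ hφ0)
    rw [this]
    exact Measurable.ite (hZmeas (measurableSet_singleton 0)) measurable_const
      ((hZmeas.inv.ennreal_toReal).mul ((hGmeas _ hφ.ennreal_ofReal).ennreal_toReal))
  -- the key statement for nonnegative φ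
  have key : ∀ (φ : H → ℝ), Measurable φ → (∀ v, 0 ≤ φ v) → ∀ M : ℝ, (∀ v, |φ v| ≤ M) →
      ∀ B : Set (Fin n → ℝ), MeasurableSet B →
      ∫ ω, φ (V ω) * Set.indicator B (fun _ => (1 : ℝ)) (Y ω) ∂P
        = ∫ ω, (∫ v, φ v ∂(μ (Y ω))) * Set.indicator B (fun _ => (1 : ℝ)) (Y ω) ∂P := by
    intro φ hφ hφ0 M hM B hB
    have hφM : ∀ v, φ v ≤ M := fun v => (le_abs_self _).trans ((abs_abs (φ v)) ▸ hM v)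
    -- left side
    have hL1 := step1 φ hφ M hM B hB
    have hL2 : ENNReal.ofReal (∫ ω, φ (V ω) * (Q (V ω) B).toReal ∂P)
        = ∫⁻ ω, ENNReal.ofReal (φ (V ω)) * Q (V ω) B ∂P := by
      rw [ofReal_integral_eq_lintegral_ofReal]
      · exact lintegral_congr fun ω => by
          rw [ENNReal.ofReal_mul (hφ0 _), ENNReal.ofReal_toReal (measure_ne_top _ _)]
      · apply intbdΩ _ ((hφ.comp hV).mul (((hQmeas B hB).comp hV).ennreal_toReal)) (|M|)
        intro ω
        show |φ (V ω) * (Q (V ω) B).toReal| ≤ |M|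
        rw [abs_mul, abs_of_nonneg (hφ0 _), abs_of_nonneg ENNReal.toReal_nonneg]
        have h1 : (Q (V ω) B).toReal ≤ 1 := by
          have := ENNReal.toReal_mono ENNReal.one_ne_top (prob_le_one (μ := Q (V ω)) (s := B))
          simpa using this
        calc φ (V ω) * (Q (V ω) B).toReal ≤ |M| * 1 :=
              mul_le_mul ((hφM _).trans (le_abs_self M)) h1 ENNReal.toReal_nonneg (abs_nonneg _)
          _ = |M| := mul_one _
      · exact Filter.Eventually.of_forall fun ω => mul_nonneg (hφ0 _) ENNReal.toReal_nonneg
    have hL3 : ∫⁻ ω, ENNReal.ofReal (φ (V ω)) * Q (V ω) B ∂P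
        = ∫⁻ y in B, ∫⁻ v, ENNReal.ofReal (φ v) * ρ v y ∂(Measure.map V P) ∂γ := by
      have h1 : ∫⁻ ω, ENNReal.ofReal (φ (V ω)) * Q (V ω) B ∂P
          = ∫⁻ v, ENNReal.ofReal (φ v) * Q v B ∂(Measure.map V P) :=
        (lintegral_map (hφ.ennreal_ofReal.mul (hQmeas B hB)) hV).symm
      rw [h1]
      have h2 : ∀ v, ENNReal.ofReal (φ v) * Q v B
          = ENNReal.ofReal (φ v) * ∫⁻ y in B, ρ v y ∂γ := fun v => by
        rw [hQγ v, withDensity_apply _ hB]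
      simp only [h2]
      exact tonelli _ hφ.ennreal_ofReal B hB
    -- right side
    have hgb : ∀ y, |∫ v, φ v ∂(μ y)| ≤ |M| := hIbd φ M hM
    have hg0 : ∀ y, 0 ≤ ∫ v, φ v ∂(μ y) := fun y => integral_nonneg hφ0
    have hgm : Measurable (fun y => ∫ v, φ v ∂(μ y)) := hgmeas φ hφ hφ0
    have hR1 : ∫ ω, (∫ v, φ v ∂(μ (Y ω))) * Set.indicator B (fun _ => (1:ℝ)) (Y ω) ∂P
        = ∫ ω in Y ⁻¹' B, (∫ v, φ v ∂(μ (Y ω))) ∂P := by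
      rw [← integral_indicator (hY hB)]
      refine integral_congr_ae (Filter.Eventually.of_forall fun ω => ?_)
      by_cases h : Y ω ∈ B <;> simp [h, Set.indicator_apply]
    have hR2 : ENNReal.ofReal (∫ ω in Y ⁻¹' B, (∫ v, φ v ∂(μ (Y ω))) ∂P)
        = ∫⁻ ω in Y ⁻¹' B, ENNReal.ofReal (∫ v, φ v ∂(μ (Y ω))) ∂P := by
      rw [ofReal_integral_eq_lintegral_ofReal]
      · exact (intbdΩ _ (hgm.comp hY) (|M|) fun ω => hgb _).restrict
      · exact Filter.Eventually.of_forall fun ω => hg0 _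
    have hR3 : ∫⁻ ω in Y ⁻¹' B, ENNReal.ofReal (∫ v, φ v ∂(μ (Y ω))) ∂P
        = ∫⁻ y in B, ENNReal.ofReal (∫ v, φ v ∂(μ y)) ∂(Measure.map Y P) :=
      (setLIntegral_map hB hgm.ennreal_ofReal hY).symm
    have hR4 : ∫⁻ y in B, ENNReal.ofReal (∫ v, φ v ∂(μ y)) ∂(Measure.map Y P)
        = ∫⁻ y in B, Z y * ENNReal.ofReal (∫ v, φ v ∂(μ y)) ∂γ := by
      rw [hYlaw]
      rw [show (γ.withDensity Z).restrict B = (γ.restrict B).withDensity Z from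
        restrict_withDensity hB Z]
      rw [lintegral_withDensity_eq_lintegral_mul _ hZmeas hgm.ennreal_ofReal]
      simp only [Pi.mul_apply]
    have hae : ∀ᵐ y ∂(γ.restrict B), Z y * ENNReal.ofReal (∫ v, φ v ∂(μ y))
        = ∫⁻ v, ENNReal.ofReal (φ v) * ρ v y ∂(Measure.map V P) := by
      filter_upwards [ae_restrict_of_ae hZae] with y hy
      have hGle : (∫⁻ v, ENNReal.ofReal (φ v) * ρ v y ∂(Measure.map V P))
          ≤ ENNReal.ofReal M * Z y := by
        rw [hZ y, ← lintegral_const_mul _ (hρy y)]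
        exact lintegral_mono fun v =>
          mul_le_mul_left (ENNReal.ofReal_le_ofReal (hφM v)) _
      by_cases h : Z y = 0
      · rw [h, zero_mul]
        refine (le_antisymm ?_ zero_le).symm
        simpa [h] using hGle
      · have hne : Z y ≠ ⊤ := hy.ne
        have hGne : (∫⁻ v, ENNReal.ofReal (φ v) * ρ v y ∂(Measure.map V P)) ≠ ⊤ :=
          (lt_of_le_of_lt hGle
            (ENNReal.mul_lt_top ENNReal.ofReal_lt_top hy)).ne
        rw [hgrep φ hφ hφ0 y, if_neg h,
          ENNReal.ofReal_mul ENNReal.toReal_nonneg,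
          ENNReal.ofReal_toReal (by simp [h]),
          ENNReal.ofReal_toReal hGne,
          ← mul_assoc, ENNReal.mul_inv_cancel h hne, one_mul]
    have hR5 : ∫⁻ y in B, Z y * ENNReal.ofReal (∫ v, φ v ∂(μ y)) ∂γ
        = ∫⁻ y in B, ∫⁻ v, ENNReal.ofReal (φ v) * ρ v y ∂(Measure.map V P) ∂γ :=
      lintegral_congr_ae hae
    -- combine
    have hLnn : 0 ≤ ∫ ω, φ (V ω) * Set.indicator B (fun _ => (1:ℝ)) (Y ω) ∂P :=
      integral_nonneg fun ω => mul_nonneg (hφ0 _) (by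
        by_cases h : Y ω ∈ B <;> simp [h, Set.indicator_apply])
    have hRnn : 0 ≤ ∫ ω, (∫ v, φ v ∂(μ (Y ω))) * Set.indicator B (fun _ => (1:ℝ)) (Y ω) ∂P :=
      integral_nonneg fun ω => mul_nonneg (hg0 _) (by
        by_cases h : Y ω ∈ B <;> simp [h, Set.indicator_apply])
    refine (ENNReal.ofReal_eq_ofReal_iff hLnn hRnn).mp ?_
    calc ENNReal.ofReal (∫ ω, φ (V ω) * Set.indicator B (fun _ => (1:ℝ)) (Y ω) ∂P)
        = ENNReal.ofReal (∫ ω, φ (V ω) * (Q (V ω) B).toReal ∂P) := by rw [hL1]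
      _ = ∫⁻ y in B, ∫⁻ v, ENNReal.ofReal (φ v) * ρ v y ∂(Measure.map V P) ∂γ := by
          rw [hL2, hL3]
      _ = ∫⁻ y in B, Z y * ENNReal.ofReal (∫ v, φ v ∂(μ y)) ∂γ := hR5.symm
      _ = ENNReal.ofReal (∫ ω, (∫ v, φ v ∂(μ (Y ω))) * Set.indicator B (fun _ => (1:ℝ)) (Y ω) ∂P) := by
          rw [hR1, hR2, hR3, hR4]
  -- general case: split into positive and negative parts
  intro φ hφ hMex B hB
  obtain ⟨M, hM⟩ := hMex
  have hφp : Measurable (fun v => max (φ v) 0) := hφ.max measurable_const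
  have hφm : Measurable (fun v => max (-φ v) 0) := hφ.neg.max measurable_const
  have h0p : ∀ v, 0 ≤ max (φ v) 0 := fun v => le_max_right _ _
  have h0m : ∀ v, 0 ≤ max (-φ v) 0 := fun v => le_max_right _ _
  have hbp : ∀ v, |max (φ v) 0| ≤ |M| := by
    intro v
    rw [abs_of_nonneg (h0p v)]
    exact (max_le (le_abs_self _) (abs_nonneg _)).trans ((hM v).trans (le_abs_self M))
  have hbm : ∀ v, |max (-φ v) 0| ≤ |M| := by
    intro v
    rw [abs_of_nonneg (h0m v)]
    refine (max_le ?_ (abs_nonneg (φ v))).trans ((hM v).trans (le_abs_self M))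
    rw [← abs_neg]; exact le_abs_self _
  have hsub : ∀ v, φ v = max (φ v) 0 - max (-φ v) 0 := by
    intro v
    rcases le_total (φ v) 0 with h | h <;> simp [max_eq_left, max_eq_right, h]
  have Kp := key _ hφp h0p (|M|) hbp B hB
  have Km := key _ hφm h0m (|M|) hbm B hB
  -- integrability facts
  have hintp : Integrable (fun ω => max (φ (V ω)) 0 * Set.indicator B (fun _ => (1:ℝ)) (Y ω)) P := by
    apply intbdΩ _ ((hφp.comp hV).mul (hindmeas B hB)) (|M|)
    intro ω
    rw [Pi.mul_apply, abs_mul]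
    calc |max (φ (V ω)) 0| * |Set.indicator B (fun _ => (1:ℝ)) (Y ω)| ≤ |M| * 1 :=
          mul_le_mul (hbp _) (hindbd B ω) (abs_nonneg _) (abs_nonneg _)
      _ = |M| := mul_one _
  have hintm : Integrable (fun ω => max (-φ (V ω)) 0 * Set.indicator B (fun _ => (1:ℝ)) (Y ω)) P := by
    apply intbdΩ _ ((hφm.comp hV).mul (hindmeas B hB)) (|M|)
    intro ω
    rw [Pi.mul_apply, abs_mul]
    calc |max (-φ (V ω)) 0| * |Set.indicator B (fun _ => (1:ℝ)) (Y ω)| ≤ |M| * 1 :=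
          mul_le_mul (hbm _) (hindbd B ω) (abs_nonneg _) (abs_nonneg _)
      _ = |M| := mul_one _
  have hgp : Measurable (fun y => ∫ v, max (φ v) 0 ∂(μ y)) := hgmeas _ hφp h0p
  have hgm' : Measurable (fun y => ∫ v, max (-φ v) 0 ∂(μ y)) := hgmeas _ hφm h0m
  have hintgp : Integrable (fun ω => (∫ v, max (φ v) 0 ∂(μ (Y ω)))
      * Set.indicator B (fun _ => (1:ℝ)) (Y ω)) P := by
    apply intbdΩ _ ((hgp.comp hY).mul (hindmeas B hB)) (|M| * 1)
    intro ω
    rw [Pi.mul_apply, abs_mul]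
    exact mul_le_mul ((hIbd _ _ hbp _).trans (le_of_eq (abs_abs M)))
      (hindbd B ω) (abs_nonneg _) (abs_nonneg _)
  have hintgm : Integrable (fun ω => (∫ v, max (-φ v) 0 ∂(μ (Y ω)))
      * Set.indicator B (fun _ => (1:ℝ)) (Y ω)) P := by
    apply intbdΩ _ ((hgm'.comp hY).mul (hindmeas B hB)) (|M| * 1)
    intro ω
    rw [Pi.mul_apply, abs_mul]
    exact mul_le_mul ((hIbd _ _ hbm _).trans (le_of_eq (abs_abs M)))
      (hindbd B ω) (abs_nonneg _) (abs_nonneg _)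
  -- pointwise splitting of the inner integral
  have hinner : ∀ y, ∫ v, φ v ∂(μ y)
      = (∫ v, max (φ v) 0 ∂(μ y)) - ∫ v, max (-φ v) 0 ∂(μ y) := by
    intro y
    have h1 : Integrable (fun v => max (φ v) 0) (μ y) := intbdH (μ y) (hmass y) _ hφp (|M|) hbp
    have h2 : Integrable (fun v => max (-φ v) 0) (μ y) := intbdH (μ y) (hmass y) _ hφm (|M|) hbm
    rw [← integral_sub h1 h2]
    exact integral_congr_ae (Filter.Eventually.of_forall fun v => hsub v)
  calc ∫ ω, φ (V ω) * Set.indicator B (fun _ => (1:ℝ)) (Y ω) ∂P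
      = ∫ ω, (max (φ (V ω)) 0 * Set.indicator B (fun _ => (1:ℝ)) (Y ω)
          - max (-φ (V ω)) 0 * Set.indicator B (fun _ => (1:ℝ)) (Y ω)) ∂P := by
        refine integral_congr_ae (Filter.Eventually.of_forall fun ω => ?_)
        show φ (V ω) * Set.indicator B (fun _ => (1:ℝ)) (Y ω)
          = max (φ (V ω)) 0 * Set.indicator B (fun _ => (1:ℝ)) (Y ω)
            - max (-φ (V ω)) 0 * Set.indicator B (fun _ => (1:ℝ)) (Y ω)
        rw [← sub_mul, ← hsub (V ω)]
    _ = (∫ ω, max (φ (V ω)) 0 * Set.indicator B (fun _ => (1:ℝ)) (Y ω) ∂P)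
        - ∫ ω, max (-φ (V ω)) 0 * Set.indicator B (fun _ => (1:ℝ)) (Y ω) ∂P :=
        integral_sub hintp hintm
    _ = (∫ ω, (∫ v, max (φ v) 0 ∂(μ (Y ω))) * Set.indicator B (fun _ => (1:ℝ)) (Y ω) ∂P)
        - ∫ ω, (∫ v, max (-φ v) 0 ∂(μ (Y ω))) * Set.indicator B (fun _ => (1:ℝ)) (Y ω) ∂P := by
        rw [Kp, Km]
    _ = ∫ ω, ((∫ v, max (φ v) 0 ∂(μ (Y ω))) * Set.indicator B (fun _ => (1:ℝ)) (Y ω)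
          - (∫ v, max (-φ v) 0 ∂(μ (Y ω))) * Set.indicator B (fun _ => (1:ℝ)) (Y ω)) ∂P :=
        (integral_sub hintgp hintgm).symm
    _ = ∫ ω, (∫ v, φ v ∂(μ (Y ω))) * Set.indicator B (fun _ => (1:ℝ)) (Y ω) ∂P := by
        refine integral_congr_ae (Filter.Eventually.of_forall fun ω => ?_)
        show (∫ v, max (φ v) 0 ∂(μ (Y ω))) * Set.indicator B (fun _ => (1:ℝ)) (Y ω)
            - (∫ v, max (-φ v) 0 ∂(μ (Y ω))) * Set.indicator B (fun _ => (1:ℝ)) (Y ω)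
          = (∫ v, φ v ∂(μ (Y ω))) * Set.indicator B (fun _ => (1:ℝ)) (Y ω)
        rw [← sub_mul, hinner (Y ω)]
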